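/- The function x ↦ ∫_u^1 dξ/√(−log(1 − ξ²)), viewed as defining u = u_cusp(x) implicitly via |x| = ∫_{u}^1 dξ/√(−log(1−ξ²)) for u ∈ (0,1), is well-defined: the integral ∫_u^1 dξ/√(−log(1 − ξ²)) is finite for every u ∈ (0,1), and the map u ↦ ∫_u^1 dξ/√(−log(1−ξ²)) is a strictly decreasing continuous bijection from (0,1) onto (0, ∞). -/

import Mathlib

open MeasureTheory intervalIntegral Real Set

/-- The implicit function defining the cusped soliton:
`Φ u = ∫_u^1 dξ/√(−log(1−ξ²))`. -/
noncomputable def Phi (u : ℝ) : ℝ :=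
  ∫ ξ in u..(1 : ℝ), (Real.sqrt (-Real.log (1 - ξ ^ 2)))⁻¹

private noncomputable def fcusp (ξ : ℝ) : ℝ := (Real.sqrt (-Real.log (1 - ξ ^ 2)))⁻¹

private lemma log_pos_aux {x : ℝ} (hx : x ∈ Set.Ioo (0:ℝ) 1) :
    0 < -Real.log (1 - x ^ 2) := by
  have h1 : 0 < 1 - x ^ 2 := by nlinarith [hx.1, hx.2]
  have h2 : 1 - x ^ 2 < 1 := by nlinarith [hx.1]
  have := Real.log_neg h1 h2
  linarith

private lemma fcusp_nonneg (x : ℝ) : 0 ≤ fcusp x :=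
  inv_nonneg.mpr (Real.sqrt_nonneg _)

private lemma fcusp_pos {x : ℝ} (hx : x ∈ Set.Ioo (0:ℝ) 1) : 0 < fcusp x :=
  inv_pos.mpr (Real.sqrt_pos.mpr (log_pos_aux hx))

private lemma fcusp_contAt {x : ℝ} (hx : x ∈ Set.Ioo (0:ℝ) 1) : ContinuousAt fcusp x := by
  have h1 : 0 < 1 - x ^ 2 := by nlinarith [hx.1, hx.2]
  have hc : ContinuousAt (fun ξ : ℝ => 1 - ξ ^ 2) x := by fun_prop
  have hlog : ContinuousAt (fun ξ : ℝ => Real.log (1 - ξ ^ 2)) x :=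
    hc.log h1.ne'
  have hs : ContinuousAt (fun ξ : ℝ => Real.sqrt (-Real.log (1 - ξ ^ 2))) x :=
    Real.continuous_sqrt.continuousAt.comp hlog.neg
  exact hs.inv₀ (Real.sqrt_pos.mpr (log_pos_aux hx)).ne'

private lemma fcusp_meas : Measurable fcusp := by
  apply Measurable.inv
  exact Real.continuous_sqrt.measurable.comp (Real.measurable_log.comp (by fun_prop : Measurable (fun ξ : ℝ => 1 - ξ ^ 2))).neg

private lemma fcusp_bound {a x : ℝ} (ha : a ∈ Set.Ioo (0:ℝ) 1) (hx : x ∈ Set.Ioc a 1) :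
    fcusp x ≤ (Real.sqrt (-Real.log (1 - a ^ 2)))⁻¹ := by
  have hla := log_pos_aux ha
  rcases eq_or_lt_of_le hx.2 with h1 | h1
  · have : fcusp x = 0 := by simp [fcusp, h1]
    rw [this]
    positivity
  · have hx' : x ∈ Set.Ioo (0:ℝ) 1 := ⟨lt_trans ha.1 hx.1, h1⟩
    have h2 : 1 - x ^ 2 ≤ 1 - a ^ 2 := by nlinarith [ha.1, hx.1]
    have h3 : 0 < 1 - x ^ 2 := by nlinarith [hx'.1, hx'.2]
    have h4 : Real.log (1 - x ^ 2) ≤ Real.log (1 - a ^ 2) := Real.log_le_log h3 h2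
    have h6 := Real.sqrt_le_sqrt (by linarith : -Real.log (1 - a ^ 2) ≤ -Real.log (1 - x ^ 2))
    exact inv_anti₀ (Real.sqrt_pos.mpr hla) h6

private lemma fcusp_intg_sub {a b : ℝ} (ha : a ∈ Set.Ioo (0:ℝ) 1) (hb : b ∈ Set.Ioo (0:ℝ) 1) :
    IntervalIntegrable fcusp volume a b := by
  apply ContinuousOn.intervalIntegrable
  intro x hx
  rw [Set.mem_uIcc] at hx
  have hx' : x ∈ Set.Ioo (0:ℝ) 1 := by
    rcases hx with h | h
    · exact ⟨lt_of_lt_of_le ha.1 h.1, lt_of_le_of_lt h.2 hb.2⟩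
    · exact ⟨lt_of_lt_of_le hb.1 h.1, lt_of_le_of_lt h.2 ha.2⟩
  exact (fcusp_contAt hx').continuousWithinAt

private lemma fcusp_intg_one {a : ℝ} (ha : a ∈ Set.Ioo (0:ℝ) 1) :
    IntervalIntegrable fcusp volume a 1 := by
  rw [intervalIntegrable_iff_integrableOn_Ioc_of_le ha.2.le]
  refine MeasureTheory.Measure.integrableOn_of_bounded (M := (Real.sqrt (-Real.log (1 - a ^ 2)))⁻¹) (measure_Ioc_lt_top).ne
    fcusp_meas.aestronglyMeasurable ?_
  filter_upwards [MeasureTheory.ae_restrict_mem measurableSet_Ioc] with x hx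
  rw [Real.norm_eq_abs, abs_of_nonneg (fcusp_nonneg x)]
  exact fcusp_bound ha hx

private lemma Phi_eq (u : ℝ) : Phi u = ∫ ξ in u..(1:ℝ), fcusp ξ := rfl

private lemma Phi_split {a b : ℝ} (ha : a ∈ Set.Ioo (0:ℝ) 1) (hb : b ∈ Set.Ioo (0:ℝ) 1) :
    Phi a = (∫ ξ in a..b, fcusp ξ) + Phi b := by
  rw [Phi_eq, Phi_eq]
  exact (intervalIntegral.integral_add_adjacent_intervals (fcusp_intg_sub ha hb)
    (fcusp_intg_one hb)).symm

private lemma Phi_anti : StrictAntiOn Phi (Set.Ioo (0:ℝ) 1) := by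
  intro a ha b hb hab
  have hsplit := Phi_split ha hb
  have hpos : 0 < ∫ ξ in a..b, fcusp ξ := by
    apply intervalIntegral.intervalIntegral_pos_of_pos_on (fcusp_intg_sub ha hb) _ hab
    intro x hx
    exact fcusp_pos ⟨lt_trans ha.1 hx.1, lt_trans hx.2 hb.2⟩
  linarith

private lemma Phi_pos {u : ℝ} (hu : u ∈ Set.Ioo (0:ℝ) 1) : 0 < Phi u := by
  rw [Phi_eq]
  apply intervalIntegral.intervalIntegral_pos_of_pos_on (fcusp_intg_one hu) _ hu.2
  intro x hx
  exact fcusp_pos ⟨lt_trans hu.1 hx.1, hx.2⟩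

private lemma Phi_cont : ContinuousOn Phi (Set.Ioo (0:ℝ) 1) := by
  intro u hu
  apply ContinuousAt.continuousWithinAt
  have key : ∀ v ∈ Set.Ioo (0:ℝ) 1, Phi v = Phi u - ∫ x in u..v, fcusp x := by
    intro v hv
    have := Phi_split hu hv
    have hrev : (∫ ξ in u..v, fcusp ξ) = -∫ ξ in v..u, fcusp ξ :=
      (intervalIntegral.integral_symm v u)
    linarith [this, hrev]
  have hG : ContinuousAt (fun v => Phi u - ∫ x in u..v, fcusp x) u := by
    have hd : HasDerivAt (fun v => ∫ x in u..v, fcusp x) (fcusp u) u := by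
      apply intervalIntegral.integral_hasDerivAt_right (fcusp_intg_sub hu hu)
      · exact fcusp_meas.stronglyMeasurable.stronglyMeasurableAtFilter
      · exact fcusp_contAt hu
    exact continuousAt_const.sub hd.continuousAt
  apply hG.congr
  filter_upwards [isOpen_Ioo.mem_nhds hu] with v hv
  exact (key v hv).symm

private lemma Phi_le {u : ℝ} (hu : u ∈ Set.Ioo (0:ℝ) 1) (hu2 : (1/2:ℝ) ≤ u) :
    Phi u ≤ (Real.sqrt (-Real.log (1 - (1/2:ℝ) ^ 2)))⁻¹ * (1 - u) := by
  set M : ℝ := (Real.sqrt (-Real.log (1 - (1/2:ℝ) ^ 2)))⁻¹ with hM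
  have hhalf : (1/2:ℝ) ∈ Set.Ioo (0:ℝ) 1 := by norm_num
  have hbd : ∀ x ∈ Set.uIoc u 1, ‖fcusp x‖ ≤ M := by
    intro x hx
    rw [Set.uIoc_of_le hu.2.le] at hx
    rw [Real.norm_eq_abs, abs_of_nonneg (fcusp_nonneg x)]
    calc fcusp x ≤ (Real.sqrt (-Real.log (1 - u ^ 2)))⁻¹ := fcusp_bound hu hx
      _ ≤ M := by
          apply inv_anti₀ (Real.sqrt_pos.mpr (log_pos_aux hhalf))
          apply Real.sqrt_le_sqrt
          have : Real.log (1 - u ^ 2) ≤ Real.log (1 - (1/2:ℝ) ^ 2) := by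
            apply Real.log_le_log (by nlinarith [hu.1, hu.2])
            nlinarith [hu2]
          linarith
  have := intervalIntegral.norm_integral_le_of_norm_le_const hbd
  rw [← Phi_eq] at this
  have habs : |(1:ℝ) - u| = 1 - u := abs_of_nonneg (by linarith [hu.2])
  rw [Real.norm_eq_abs, habs] at this
  calc Phi u ≤ |Phi u| := le_abs_self _
    _ ≤ M * (1 - u) := this

private lemma Phi_ge {u : ℝ} (hu : u ∈ Set.Ioo (0:ℝ) (1/2)) :
    (Real.sqrt 2)⁻¹ * Real.log ((1/2) / u) ≤ Phi u := by
  have hu' : u ∈ Set.Ioo (0:ℝ) 1 := ⟨hu.1, by linarith [hu.2]⟩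
  have hhalf : (1/2:ℝ) ∈ Set.Ioo (0:ℝ) 1 := by norm_num
  have hsplit := Phi_split hu' hhalf
  have hPhalf : 0 < Phi (1/2) := Phi_pos hhalf
  have hptwise : ∀ ξ ∈ Set.Icc u (1/2:ℝ), (Real.sqrt 2)⁻¹ * ξ⁻¹ ≤ fcusp ξ := by
    intro ξ hξ
    have hξ0 : 0 < ξ := lt_of_lt_of_le hu.1 hξ.1
    have hξ2 : ξ ≤ 1/2 := hξ.2
    have hξ' : ξ ∈ Set.Ioo (0:ℝ) 1 := ⟨hξ0, by linarith⟩
    have ht : ξ ^ 2 ≤ 1/4 := by nlinarith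
    have h1t : 0 < 1 - ξ ^ 2 := by nlinarith
    have hlog2 : -Real.log (1 - ξ ^ 2) ≤ 2 * ξ ^ 2 := by
      have h1 : Real.log ((1 - ξ ^ 2)⁻¹) ≤ (1 - ξ ^ 2)⁻¹ - 1 :=
        Real.log_le_sub_one_of_pos (by positivity)
      rw [Real.log_inv] at h1
      have h2 : (1 - ξ ^ 2)⁻¹ - 1 = ξ ^ 2 / (1 - ξ ^ 2) := by
        field_simp
        ring
      rw [h2] at h1
      have h3 : ξ ^ 2 / (1 - ξ ^ 2) ≤ 2 * ξ ^ 2 := by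
        rw [div_le_iff₀ h1t]
        nlinarith
      linarith
    have hsq : Real.sqrt (-Real.log (1 - ξ ^ 2)) ≤ Real.sqrt 2 * ξ := by
      calc Real.sqrt (-Real.log (1 - ξ ^ 2)) ≤ Real.sqrt (2 * ξ ^ 2) :=
            Real.sqrt_le_sqrt hlog2
        _ = Real.sqrt 2 * ξ := by
            rw [Real.sqrt_mul (by norm_num : (0:ℝ) ≤ 2), Real.sqrt_sq hξ0.le]
    have hspos : 0 < Real.sqrt (-Real.log (1 - ξ ^ 2)) :=
      Real.sqrt_pos.mpr (log_pos_aux hξ')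
    have := inv_anti₀ hspos hsq
    rw [mul_inv] at this
    exact this
  have hintg_g : IntervalIntegrable (fun ξ : ℝ => (Real.sqrt 2)⁻¹ * ξ⁻¹) volume u (1/2) := by
    apply ContinuousOn.intervalIntegrable
    intro x hx
    rw [Set.uIcc_of_le (by linarith [hu.2] : u ≤ (1/2:ℝ))] at hx
    have : 0 < x := lt_of_lt_of_le hu.1 hx.1
    exact (continuousAt_const.mul (continuousAt_inv₀ this.ne')).continuousWithinAt
  have hmono : (∫ ξ in u..(1/2:ℝ), (Real.sqrt 2)⁻¹ * ξ⁻¹) ≤ ∫ ξ in u..(1/2:ℝ), fcusp ξ :=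
    intervalIntegral.integral_mono_on (by linarith [hu.2]) hintg_g
      (fcusp_intg_sub hu' hhalf) hptwise
  have hval : (∫ ξ in u..(1/2:ℝ), (Real.sqrt 2)⁻¹ * ξ⁻¹)
      = (Real.sqrt 2)⁻¹ * Real.log ((1/2) / u) := by
    rw [intervalIntegral.integral_const_mul, integral_inv_of_pos hu.1 (by norm_num : (0:ℝ) < 1/2)]
  linarith [hmono, hval.symm.le, hPhalf, hsplit]

theorem cusp_implicit_function_welldefined :
    (∀ u ∈ Set.Ioo (0 : ℝ) 1,
      IntervalIntegrable (fun ξ : ℝ => (Real.sqrt (-Real.log (1 - ξ ^ 2)))⁻¹)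
        volume u 1) ∧
    StrictAntiOn Phi (Set.Ioo (0 : ℝ) 1) ∧
    ContinuousOn Phi (Set.Ioo (0 : ℝ) 1) ∧
    Set.BijOn Phi (Set.Ioo (0 : ℝ) 1) (Set.Ioi (0 : ℝ)) := by
  refine ⟨fun u hu => fcusp_intg_one hu, Phi_anti, Phi_cont, ?_, Phi_anti.injOn, ?_⟩
  · intro u hu
    exact Set.mem_Ioi.mpr (Phi_pos hu)
  · intro y hy
    rw [Set.mem_Ioi] at hy
    set M : ℝ := (Real.sqrt (-Real.log (1 - (1/2:ℝ) ^ 2)))⁻¹ with hM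
    have hhalf : (1/2:ℝ) ∈ Set.Ioo (0:ℝ) 1 := by norm_num
    have hMpos : 0 < M := by
      rw [hM]
      exact inv_pos.mpr (Real.sqrt_pos.mpr (log_pos_aux hhalf))
    -- b close to 1
    set b : ℝ := max (1/2) (1 - y / (2 * M)) with hb
    have hb1 : (1/2:ℝ) ≤ b := le_max_left _ _
    have hb2 : b < 1 := by
      apply max_lt (by norm_num)
      have : 0 < y / (2 * M) := by positivity
      linarith
    have hbmem : b ∈ Set.Ioo (0:ℝ) 1 := ⟨by linarith, hb2⟩
    have hPb : Phi b ≤ y := by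
      have h1 : Phi b ≤ M * (1 - b) := Phi_le hbmem hb1
      have h2 : 1 - b ≤ y / (2 * M) := by
        have := le_max_right (1/2:ℝ) (1 - y / (2 * M))
        linarith
      have h3 : M * (1 - b) ≤ M * (y / (2 * M)) :=
        mul_le_mul_of_nonneg_left h2 hMpos.le
      have h4 : M * (y / (2 * M)) = y / 2 := by
        field_simp
      linarith
    -- a close to 0
    set a : ℝ := min (1/4) (Real.exp (Real.log (1/2) - Real.sqrt 2 * y)) with ha
    have ha0 : 0 < a := lt_min (by norm_num) (Real.exp_pos _)
    have ha4 : a ≤ 1/4 := min_le_left _ _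
    have hamem : a ∈ Set.Ioo (0:ℝ) (1/2) := ⟨ha0, by linarith⟩
    have hamem' : a ∈ Set.Ioo (0:ℝ) 1 := ⟨ha0, by linarith⟩
    have hPa : y ≤ Phi a := by
      have h1 := Phi_ge hamem
      have hloga : Real.log a ≤ Real.log (1/2) - Real.sqrt 2 * y := by
        calc Real.log a ≤ Real.log (Real.exp (Real.log (1/2) - Real.sqrt 2 * y)) :=
              Real.log_le_log ha0 (min_le_right _ _)
          _ = Real.log (1/2) - Real.sqrt 2 * y := Real.log_exp _
      have hldiv : Real.log ((1/2) / a) = Real.log (1/2) - Real.log a :=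
        Real.log_div (by norm_num) ha0.ne'
      have h2 : Real.sqrt 2 * y ≤ Real.log ((1/2) / a) := by
        rw [hldiv]; linarith
      have h3 : (Real.sqrt 2)⁻¹ * (Real.sqrt 2 * y) ≤ (Real.sqrt 2)⁻¹ * Real.log ((1/2) / a) :=
        mul_le_mul_of_nonneg_left h2 (by positivity)
      have hs2 : Real.sqrt 2 ≠ 0 := by positivity
      have h4 : (Real.sqrt 2)⁻¹ * (Real.sqrt 2 * y) = y := by
        field_simp
      linarith
    have hab : a ≤ b := by linarith
    have hsub : Set.Icc a b ⊆ Set.Ioo (0:ℝ) 1 := fun x hx =>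
      ⟨lt_of_lt_of_le ha0 hx.1, lt_of_le_of_lt hx.2 hb2⟩
    have hivt := intermediate_value_Icc' hab (Phi_cont.mono hsub)
    have hy' : y ∈ Set.Icc (Phi b) (Phi a) := ⟨hPb, hPa⟩
    obtain ⟨u, hu, hPu⟩ := hivt hy'
    exact ⟨u, hsub hu, hPu⟩
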